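/- Let H = R + C be Hermitian matrices of size d, where R has exactly one nonzero eigenvalue r ≤ 0 and C is positive semidefinite with eigenvalues c_0 ≥ c_1 ≥ … ≥ c_{d−1} ≥ 0. If the smallest eigenvalue of H is nonpositive, then ‖H‖_1 ≤ Σ_{i=0}^{d−2} c_i − r − c_{d−1} = Tr[C] − r − 2c_{d−1}. -/

import Mathlib

open Matrix Kronecker
open scoped ComplexOrder

noncomputable section

variable {n : Type*} [Fintype n] [DecidableEq n]

/-- A density operator: positive semidefinite with unit trace. -/
def IsDensity (ρ : Matrix n n ℂ) : Prop := ρ.PosSemidef ∧ ρ.trace = 1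

/-- A POVM: positive semidefinite effects summing to the identity. -/
def IsPOVM {m : ℕ} (π : Fin m → Matrix n n ℂ) : Prop :=
  (∀ y, (π y).PosSemidef) ∧ ∑ y, π y = 1

/-- The Choi matrix of a map on matrices. -/
def choi {p q : Type*} [Fintype p] [DecidableEq p] [Fintype q] [DecidableEq q]
    (Φ : Matrix p p ℂ → Matrix q q ℂ) : Matrix (p × q) (p × q) ℂ :=
  ∑ i, ∑ j, (Matrix.single i j (1 : ℂ)) ⊗ₖ (Φ (Matrix.single i j (1 : ℂ)))

/-- Completely positive trace preserving linear map. -/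
def IsCPTP {p q : Type*} [Fintype p] [DecidableEq p] [Fintype q] [DecidableEq q]
    (Φ : Matrix p p ℂ → Matrix q q ℂ) : Prop :=
  IsLinearMap ℂ Φ ∧ (choi Φ).PosSemidef ∧ ∀ ρ, (Φ ρ).trace = ρ.trace

/-- The average payoff of game `g`, channel `Φ`, encoding `ρ`, decoding `π`. -/
def payoff {p q : Type*} [Fintype p] [DecidableEq p] [Fintype q] [DecidableEq q]
    {nn m : ℕ} (g : Fin nn → Fin m → ℝ) (Φ : Matrix p p ℂ → Matrix q q ℂ)
    (ρ : Fin nn → Matrix p p ℂ) (π : Fin m → Matrix q q ℂ) : ℝ :=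
  ∑ x, ∑ y, ((Φ (ρ x) * π y).trace).re * g x y

/-- The communication utility of channel `Φ` for game `g`. -/
def utility {p q : Type*} [Fintype p] [DecidableEq p] [Fintype q] [DecidableEq q]
    {nn m : ℕ} (g : Fin nn → Fin m → ℝ) (Φ : Matrix p p ℂ → Matrix q q ℂ) : ℝ :=
  sSup {u : ℝ | ∃ ρ π, (∀ x, IsDensity (ρ x)) ∧ IsPOVM π ∧ u = payoff g Φ ρ π}

/-- The trace norm (sum of singular values). -/
def traceNorm (A : Matrix n n ℂ) : ℝ :=
  ∑ i, Real.sqrt ((Matrix.posSemidef_conjTranspose_mul_self A).1.eigenvalues i)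

/-- Helstrom utility of a channel for the binary discrimination game diag(g₀, 1-g₀). -/
def helstromUtility {p q : Type*} [Fintype p] [DecidableEq p] [Fintype q] [DecidableEq q]
    (Φ : Matrix p p ℂ → Matrix q q ℂ) (g₀ : ℝ) : ℝ :=
  sSup {u : ℝ | ∃ ρ₀ ρ₁, IsDensity ρ₀ ∧ IsDensity ρ₁ ∧
    u = (1 + traceNorm ((g₀ : ℂ) • Φ ρ₀ - ((1 - g₀ : ℝ) : ℂ) • Φ ρ₁)) / 2}

lemma conj_trace' {d : ℕ} (U : Matrix.unitaryGroup (Fin d) ℂ) (B : Matrix (Fin d) (Fin d) ℂ) :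
    ((U : Matrix (Fin d) (Fin d) ℂ) * B * (star U : Matrix (Fin d) (Fin d) ℂ)).trace = B.trace := by
  rw [Matrix.trace_mul_cycle]
  rw [show ((star U : Matrix (Fin d) (Fin d) ℂ) * (U : Matrix (Fin d) (Fin d) ℂ)) = 1 from
    Matrix.UnitaryGroup.star_mul_self U, Matrix.one_mul]

lemma trace_eq_sum_eigs' {d : ℕ} {A : Matrix (Fin d) (Fin d) ℂ} (hA : A.IsHermitian) :
    A.trace = ((∑ i, hA.eigenvalues i : ℝ) : ℂ) := by
  conv_lhs => rw [hA.spectral_theorem]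
  rw [Unitary.conjStarAlgAut_apply, conj_trace', Matrix.trace_diagonal]
  push_cast
  rfl

lemma conj_unitary_diag' {d : ℕ} {A : Matrix (Fin d) (Fin d) ℂ} (hA : A.IsHermitian) (t : ℝ) :
    A - (t : ℂ) • 1 =
      (hA.eigenvectorUnitary : Matrix (Fin d) (Fin d) ℂ) *
        Matrix.diagonal (fun i => ((hA.eigenvalues i - t : ℝ) : ℂ)) *
        star (hA.eigenvectorUnitary : Matrix (Fin d) (Fin d) ℂ) := by
  set U : Matrix (Fin d) (Fin d) ℂ := (hA.eigenvectorUnitary : Matrix (Fin d) (Fin d) ℂ)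
  have hU : U * star U = 1 := (Matrix.mem_unitaryGroup_iff).mp hA.eigenvectorUnitary.2
  have ht : (t : ℂ) • (1 : Matrix (Fin d) (Fin d) ℂ) = U * ((t : ℂ) • 1) * star U := by
    rw [Matrix.mul_smul, Matrix.smul_mul, Matrix.mul_one, hU]
  conv_lhs => rw [hA.spectral_theorem, ht]
  rw [Unitary.conjStarAlgAut_apply]
  rw [← Matrix.sub_mul, ← Matrix.mul_sub]
  congr 1
  congr 1
  rw [Matrix.smul_one_eq_diagonal, Matrix.diagonal_sub]
  congr 1
  funext i
  simp

lemma psd_shift' {d : ℕ} {A : Matrix (Fin d) (Fin d) ℂ} (hA : A.IsHermitian) (t : ℝ)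
    (h : ∀ i, t ≤ hA.eigenvalues i) : (A - (t : ℂ) • 1).PosSemidef := by
  rw [conj_unitary_diag' hA t]
  have hnn : ∀ i, (0 : ℂ) ≤ ((hA.eigenvalues i - t : ℝ) : ℂ) := by
    intro i
    rw [Complex.zero_le_real]
    linarith [h i]
  simpa [Matrix.star_eq_conjTranspose] using
    (Matrix.posSemidef_diagonal_iff.mpr hnn).mul_mul_conjTranspose_same
      (hA.eigenvectorUnitary : Matrix (Fin d) (Fin d) ℂ)

lemma dot_eigenvectors' {d : ℕ} {A : Matrix (Fin d) (Fin d) ℂ} (hA : A.IsHermitian) (i j : Fin d) :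
    dotProduct (star ⇑(hA.eigenvectorBasis i)) ⇑(hA.eigenvectorBasis j) =
      if i = j then 1 else 0 := by
  rw [dotProduct_comm, ← EuclideanSpace.inner_eq_star_dotProduct]
  exact orthonormal_iff_ite.mp hA.eigenvectorBasis.orthonormal i j

lemma eig_ge' {d : ℕ} {A : Matrix (Fin d) (Fin d) ℂ} (hA : A.IsHermitian) (t : ℝ)
    (h : (A - (t : ℂ) • 1).PosSemidef) : ∀ i, t ≤ hA.eigenvalues i := by
  intro i
  have h2 := h.dotProduct_mulVec_nonneg ⇑(hA.eigenvectorBasis i)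
  rw [Matrix.sub_mulVec, Matrix.smul_mulVec, Matrix.one_mulVec,
    dotProduct_sub, hA.mulVec_eigenvectorBasis, dotProduct_smul,
    dotProduct_smul] at h2
  rw [show dotProduct (star ⇑(hA.eigenvectorBasis i)) ⇑(hA.eigenvectorBasis i) = 1 by
    simpa using dot_eigenvectors' hA i i] at h2
  simp only [smul_eq_mul, mul_one] at h2
  have h3 : (0 : ℂ) ≤ ((hA.eigenvalues i - t : ℝ) : ℂ) := by
    convert h2 using 1
    push_cast
    simp [Complex.real_smul]
  rw [Complex.zero_le_real] at h3
  linarith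

open scoped MatrixOrder in
lemma traceNorm_hermitian' {d : ℕ} (A : Matrix (Fin d) (Fin d) ℂ) (hA : A.IsHermitian) :
    traceNorm A = ∑ i, |hA.eigenvalues i| := by
  have hM : (Aᴴ * A).PosSemidef := Matrix.posSemidef_conjTranspose_mul_self A
  set U : Matrix (Fin d) (Fin d) ℂ := (hA.eigenvectorUnitary : Matrix (Fin d) (Fin d) ℂ) with hUdef
  have hUU : star U * U = 1 := Matrix.UnitaryGroup.star_mul_self hA.eigenvectorUnitary
  set N : Matrix (Fin d) (Fin d) ℂ :=
    U * Matrix.diagonal (fun i => ((|hA.eigenvalues i| : ℝ) : ℂ)) * star U with hNdef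
  have hN : N.PosSemidef := by
    have hnn : ∀ i, (0 : ℂ) ≤ ((|hA.eigenvalues i| : ℝ) : ℂ) := fun i => by
      rw [Complex.zero_le_real]; exact abs_nonneg _
    simpa [hNdef, Matrix.star_eq_conjTranspose] using
      (Matrix.posSemidef_diagonal_iff.mpr hnn).mul_mul_conjTranspose_same U
  have hNsq : N ^ 2 = Aᴴ * A := by
    rw [pow_two, hNdef]
    have hstep : ∀ X : Matrix (Fin d) (Fin d) ℂ, star U * (U * X) = X := fun X => by
      rw [← Matrix.mul_assoc, hUU, Matrix.one_mul]
    rw [Matrix.IsHermitian.eq hA]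
    conv_rhs => rw [hA.spectral_theorem, Unitary.conjStarAlgAut_apply]
    rw [← hUdef]
    simp only [Matrix.mul_assoc, hstep]
    simp only [← Matrix.mul_assoc]
    congr 1
    rw [Matrix.mul_assoc, Matrix.mul_assoc, Matrix.diagonal_mul_diagonal,
      Matrix.diagonal_mul_diagonal]
    congr 1
    funext i j
    simp only [Matrix.diagonal_apply, Function.comp_apply]
    split
    · have : |hA.eigenvalues i| * |hA.eigenvalues i| = hA.eigenvalues i * hA.eigenvalues i :=
        abs_mul_abs_self _
      calc ((|hA.eigenvalues i| : ℝ) : ℂ) * ((|hA.eigenvalues i| : ℝ) : ℂ)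
          = (((|hA.eigenvalues i| * |hA.eigenvalues i| : ℝ)) : ℂ) := by push_cast; ring
        _ = (((hA.eigenvalues i * hA.eigenvalues i : ℝ)) : ℂ) := by rw [this]
        _ = _ := by push_cast; rfl
    · rfl
  have hNsqrt : N = CFC.sqrt (Aᴴ * A) :=
    (CFC.sqrt_unique (by rw [← pow_two]; exact hNsq) hN.nonneg).symm
  have h1 : (CFC.sqrt (Aᴴ * A)).trace = ((∑ i, Real.sqrt (hM.1.eigenvalues i) : ℝ) : ℂ) := by
    rw [CFC.sqrt_eq_cfc, cfc_nnreal_eq_real _ (Aᴴ * A), hM.1.cfc_eq]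
    rw [Matrix.IsHermitian.cfc, Unitary.conjStarAlgAut_apply,
      conj_trace', Matrix.trace_diagonal]
    push_cast
    refine Finset.sum_congr rfl fun i _ => ?_
    simp [Real.coe_toNNReal', max_eq_left (hM.eigenvalues_nonneg i)]
  have h2 : N.trace = ((∑ i, |hA.eigenvalues i| : ℝ) : ℂ) := by
    rw [hNdef, conj_trace' hA.eigenvectorUnitary, Matrix.trace_diagonal]
    push_cast
    rfl
  have h3 := h2.symm.trans (hNsqrt ▸ h1)
  have h4 := Complex.ofReal_injective h3.symm
  rw [traceNorm]
  exact h4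

lemma quadform_spectral' {d : ℕ} {A : Matrix (Fin d) (Fin d) ℂ} (hA : A.IsHermitian)
    (x : Fin d → ℂ) :
    dotProduct (star x) (A *ᵥ x) =
      ∑ k, (hA.eigenvalues k : ℂ) *
        (star ((star (hA.eigenvectorUnitary : Matrix (Fin d) (Fin d) ℂ) *ᵥ x) k) *
          ((star (hA.eigenvectorUnitary : Matrix (Fin d) (Fin d) ℂ) *ᵥ x) k)) := by
  set U : Matrix (Fin d) (Fin d) ℂ := (hA.eigenvectorUnitary : Matrix (Fin d) (Fin d) ℂ) with hUdef
  set y : Fin d → ℂ := star U *ᵥ x with hydef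
  have hsy : star x ᵥ* U = star y := by
    rw [hydef, Matrix.star_mulVec]
    rw [Matrix.star_eq_conjTranspose, Matrix.conjTranspose_conjTranspose]
  conv_lhs => rw [hA.spectral_theorem, Unitary.conjStarAlgAut_apply]
  rw [← Matrix.mulVec_mulVec, ← Matrix.mulVec_mulVec, dotProduct_mulVec, hsy]
  simp only [dotProduct, Matrix.mulVec_diagonal]
  refine Finset.sum_congr rfl fun k _ => ?_
  simp only [Pi.star_apply, Function.comp_apply]
  exact mul_left_comm _ _ _

/-- Weyl-type bound on the trace norm of `R + C`. -/
theorem stmt19 {d : ℕ} (R C : Matrix (Fin d) (Fin d) ℂ)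
    (hR : R.IsHermitian) (hC : C.PosSemidef)
    (r : ℝ) (hr : r ≤ 0) (i₀ : Fin d)
    (hRr : hR.eigenvalues i₀ = r) (hR0 : ∀ i, i ≠ i₀ → hR.eigenvalues i = 0)
    (cmin : ℝ) (hc1 : ∀ i, cmin ≤ hC.1.eigenvalues i) (hc2 : ∃ i, hC.1.eigenvalues i = cmin)
    (hH : ∃ i, (hR.add hC.1).eigenvalues i ≤ 0) :
    traceNorm (R + C) ≤ (C.trace).re - r - 2 * cmin := by
  have hH' : (R + C).IsHermitian := hR.add hC.1
  set h : Fin d → ℝ := hH'.eigenvalues with hhdef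
  -- eigenvalue lower bounds for R
  have hRlow : ∀ i, r ≤ hR.eigenvalues i := by
    intro i
    by_cases hi : i = i₀
    · rw [hi, hRr]
    · rw [hR0 i hi]; exact hr
  have hRpsd : (R - (r : ℂ) • 1).PosSemidef := psd_shift' hR r hRlow
  have hCpsd : (C - (cmin : ℂ) • 1).PosSemidef := psd_shift' hC.1 cmin hc1
  have hsum : ((R + C) - ((r + cmin : ℝ) : ℂ) • 1).PosSemidef := by
    have hadd := hRpsd.add hCpsd
    have : (R - (r : ℂ) • 1) + (C - (cmin : ℂ) • 1)
        = (R + C) - ((r + cmin : ℝ) : ℂ) • 1 := by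
      push_cast
      rw [add_smul]
      abel
    rwa [this] at hadd
  have hlow : ∀ i, r + cmin ≤ h i := eig_ge' hH' (r + cmin) hsum
  have hrc0 : r + cmin ≤ 0 := by
    obtain ⟨i, hi⟩ := hH
    have := hlow i
    rw [hhdef] at this
    linarith
  -- at most one negative eigenvalue
  have huniq : ∀ i j, i ≠ j → h i < 0 → ¬ h j < 0 := by
    intro i j hij hi hj
    set v : Fin d → ℂ := ⇑(hH'.eigenvectorBasis i) with hvdef
    set w : Fin d → ℂ := ⇑(hH'.eigenvectorBasis j) with hwdef
    set UR : Matrix (Fin d) (Fin d) ℂ := (hR.eigenvectorUnitary : Matrix (Fin d) (Fin d) ℂ)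
      with hURdef
    set α : ℂ := (star UR *ᵥ v) i₀ with hαdef
    set β : ℂ := (star UR *ᵥ w) i₀ with hβdef
    obtain ⟨a, b, hab, hy0⟩ : ∃ a b : ℂ, ¬(a = 0 ∧ b = 0) ∧ a * α + b * β = 0 := by
      by_cases hα : α = 0
      · exact ⟨1, 0, by simp, by simp [hα]⟩
      · refine ⟨β, -α, fun hc => hα ?_, by ring⟩
        have := hc.2
        simpa [neg_eq_zero] using this
    set x : Fin d → ℂ := a • v + b • w with hxdef
    have hx0 : (star UR *ᵥ x) i₀ = 0 := by
      rw [hxdef, Matrix.mulVec_add, Matrix.mulVec_smul, Matrix.mulVec_smul]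
      simp only [Pi.add_apply, Pi.smul_apply, smul_eq_mul]
      rw [← hαdef, ← hβdef]
      exact hy0
    have hRx : dotProduct (star x) (R *ᵥ x) = 0 := by
      rw [quadform_spectral' hR x]
      refine Finset.sum_eq_zero fun k _ => ?_
      by_cases hk : k = i₀
      · subst hk
        rw [← hURdef, hx0]
        simp
      · rw [hR0 k hk]
        simp
    have hCx := hC.dotProduct_mulVec_nonneg x
    -- eigenvector actions
    have hHv : (R + C) *ᵥ v = (h i : ℂ) • v := by
      rw [hvdef, hH'.mulVec_eigenvectorBasis]
      funext k
      simp [Pi.smul_apply, Complex.real_smul, hhdef]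
    have hHw : (R + C) *ᵥ w = (h j : ℂ) • w := by
      rw [hwdef, hH'.mulVec_eigenvectorBasis]
      funext k
      simp [Pi.smul_apply, Complex.real_smul, hhdef]
    have hvv : dotProduct (star v) v = 1 := by
      simpa using dot_eigenvectors' hH' i i
    have hww : dotProduct (star w) w = 1 := by
      simpa using dot_eigenvectors' hH' j j
    have hvw : dotProduct (star v) w = 0 := by
      simpa [hij] using dot_eigenvectors' hH' i j
    have hwv : dotProduct (star w) v = 0 := by
      simpa [(Ne.symm hij)] using dot_eigenvectors' hH' j i
    have hHx : dotProduct (star x) ((R + C) *ᵥ x)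
        = ((h i * Complex.normSq a + h j * Complex.normSq b : ℝ) : ℂ) := by
      rw [hxdef, Matrix.mulVec_add, Matrix.mulVec_smul, Matrix.mulVec_smul, hHv, hHw]
      simp only [star_add, star_smul, add_dotProduct, dotProduct_add,
        smul_dotProduct, dotProduct_smul, smul_eq_mul, smul_smul]
      rw [hvv, hww, hvw, hwv]
      push_cast
      rw [Complex.normSq_eq_conj_mul_self, Complex.normSq_eq_conj_mul_self]
      push_cast
      ring_nf
      simp [RCLike.star_def]
      ring
    have hge : (0 : ℂ) ≤ dotProduct (star x) ((R + C) *ᵥ x) := by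
      rw [Matrix.add_mulVec, dotProduct_add, hRx, zero_add]
      exact hCx
    rw [hHx, Complex.zero_le_real] at hge
    rcases not_and_or.mp hab with ha | hb
    · nlinarith [Complex.normSq_pos.mpr ha, Complex.normSq_nonneg b]
    · nlinarith [Complex.normSq_pos.mpr hb, Complex.normSq_nonneg a]
  -- trace identities
  have htrR : R.trace = (r : ℂ) := by
    rw [trace_eq_sum_eigs' hR]
    congr 1
    rw [Finset.sum_eq_single i₀ (fun i _ hi => hR0 i hi) (by simp)]
    exact hRr
  have htrC : C.trace = ((∑ i, hC.1.eigenvalues i : ℝ) : ℂ) := trace_eq_sum_eigs' hC.1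
  have htrCre : (C.trace).re = ∑ i, hC.1.eigenvalues i := by
    rw [htrC, Complex.ofReal_re]
  have htrH : ∑ i, h i = r + ∑ i, hC.1.eigenvalues i := by
    have e1 : (R + C).trace = ((∑ i, h i : ℝ) : ℂ) := trace_eq_sum_eigs' hH'
    rw [Matrix.trace_add, htrR, htrC] at e1
    have : ((r + ∑ i, hC.1.eigenvalues i : ℝ) : ℂ) = ((∑ i, h i : ℝ) : ℂ) := by
      rw [Complex.ofReal_add]
      exact e1
    exact (Complex.ofReal_injective this).symm
  -- final arithmetic
  rw [traceNorm_hermitian' (R + C) hH']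
  have key : ∑ i, |h i| ≤ (∑ i, h i) - 2 * (r + cmin) := by
    by_cases hneg : ∃ j, h j < 0
    · obtain ⟨j, hj⟩ := hneg
      have habs : ∀ i ∈ Finset.univ.erase j, |h i| = h i := by
        intro i hi
        have hij : i ≠ j := Finset.ne_of_mem_erase hi
        exact abs_of_nonneg (not_lt.mp (huniq j i (Ne.symm hij) hj))
      rw [← Finset.add_sum_erase _ _ (Finset.mem_univ j),
          ← Finset.add_sum_erase _ (fun i => h i) (Finset.mem_univ j)]
      rw [Finset.sum_congr rfl habs, abs_of_neg hj]
      have := hlow j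
      linarith
    · push_neg at hneg
      have : ∑ i, |h i| = ∑ i, h i :=
        Finset.sum_congr rfl fun i _ => abs_of_nonneg (hneg i)
      rw [this]
      linarith
  rw [htrCre]
  calc ∑ i, |hH'.eigenvalues i| = ∑ i, |h i| := by rw [hhdef]
    _ ≤ (∑ i, h i) - 2 * (r + cmin) := key
    _ = (∑ i, hC.1.eigenvalues i) - r - 2 * cmin := by rw [htrH]; ring


end
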